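/- Let u be subharmonic on the open disk of radius R₀ centered at the origin in ℝ², and suppose u(x,y) ≤ v₁(x,y) on the circle x²+y²=R₀², where v₁(r cos θ, r sin θ) = C r² |sin(2θ)| for some C > 0. If moreover u(x,0) ≤ 0 and u(0,y) ≤ 0 for |x|,|y| < R₀, then u(x,y) ≤ C(x²+y²) for all x²+y² < R₀². -/

import Mathlib

open MeasureTheory Metric Complex

def SubharmonicOn (u : ℂ → ℝ) (U : Set ℂ) : Prop :=
  UpperSemicontinuousOn u U ∧
    ∀ (c : ℂ) (r : ℝ), 0 < r → closedBall c r ⊆ U →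
      u c ≤ (2 * Real.pi)⁻¹ *
        ∫ θ in (0 : ℝ)..(2 * Real.pi), u (c + r * Complex.exp (θ * Complex.I))

section Aux
open intervalIntegral


lemma usc_exists_max {K : Set ℂ} (hK : IsCompact K) (hne : K.Nonempty) {f : ℂ → ℝ}
    (hf : UpperSemicontinuousOn f K) : ∃ x ∈ K, ∀ y ∈ K, f y ≤ f x := by
  by_contra hcon
  push_neg at hcon
  have hsel : ∀ x : ℂ, ∃ y : ℂ, x ∈ K → y ∈ K ∧ f x < f y := by
    intro x
    by_cases hx : x ∈ K
    · obtain ⟨y, hy, hlt⟩ := hcon x hx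
      exact ⟨y, fun _ => ⟨hy, hlt⟩⟩
    · exact ⟨x, fun h => absurd h hx⟩
  choose Y hY using hsel
  have hUsel : ∀ x : ℂ, ∃ U : Set ℂ, x ∈ U ∧ IsOpen U ∧
      (x ∈ K → ∀ z ∈ U ∩ K, f z < f (Y x)) := by
    intro x
    by_cases hx : x ∈ K
    · have := hf x hx (f (Y x)) ((hY x hx).2)
      rw [eventually_nhdsWithin_iff] at this
      obtain ⟨U, hU1, hU2, hU3⟩ := _root_.mem_nhds_iff.1 this
      exact ⟨U, hU3, hU2, fun _ z hz => hU1 hz.1 hz.2⟩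
    · exact ⟨Set.univ, trivial, isOpen_univ, fun h => absurd h hx⟩
  choose U hUmem hUopen hUlt using hUsel
  obtain ⟨t, htK, hcov⟩ := hK.elim_nhds_subcover U (fun x _ => (hUopen x).mem_nhds (hUmem x))
  have htne : t.Nonempty := by
    obtain ⟨x0, hx0⟩ := hne
    obtain ⟨i, hi, _⟩ := Set.mem_iUnion₂.1 (hcov hx0)
    exact ⟨i, hi⟩
  obtain ⟨b, hb, hbmax⟩ := t.exists_max_image (fun x => f (Y x)) htne
  have hbK : b ∈ K := htK b hb
  have hYbK : Y b ∈ K := (hY b hbK).1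
  obtain ⟨i, hi, hmemi⟩ := Set.mem_iUnion₂.1 (hcov hYbK)
  have : f (Y b) < f (Y i) := hUlt i (htK i hi) (Y b) ⟨hmemi, hYbK⟩
  exact absurd (hbmax i hi) (not_le.2 this)



lemma circle_re (c : ℂ) (r θ : ℝ) :
    (c + r * Complex.exp (θ * Complex.I)).re = c.re + r * Real.cos θ := by
  simp [Complex.add_re, Complex.mul_re, Complex.exp_ofReal_mul_I_re, Complex.exp_ofReal_mul_I_im]

lemma circle_im (c : ℂ) (r θ : ℝ) :
    (c + r * Complex.exp (θ * Complex.I)).im = c.im + r * Real.sin θ := by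
  simp [Complex.add_im, Complex.mul_im, Complex.exp_ofReal_mul_I_re, Complex.exp_ofReal_mul_I_im]

lemma int_mul (c : ℂ) (r : ℝ) :
    (∫ θ in (0:ℝ)..(2*Real.pi),
      (c + r * Complex.exp (θ * Complex.I)).re * (c + r * Complex.exp (θ * Complex.I)).im)
    = 2 * Real.pi * (c.re * c.im) := by
  simp only [circle_re, circle_im]
  have h : ∀ θ : ℝ, (c.re + r * Real.cos θ) * (c.im + r * Real.sin θ)
      = c.re * c.im + (r * c.re) * Real.sin θ + (r * c.im) * Real.cos θ
        + r^2 * (Real.sin θ * Real.cos θ) := by intro θ; ring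
  simp only [h]
  have i1 : IntervalIntegrable (fun θ : ℝ => c.re * c.im + (r * c.re) * Real.sin θ) volume 0 (2*Real.pi) := by
    apply Continuous.intervalIntegrable; continuity
  have i2 : IntervalIntegrable (fun θ : ℝ => (r * c.im) * Real.cos θ) volume 0 (2*Real.pi) := by
    apply Continuous.intervalIntegrable; continuity
  have i3 : IntervalIntegrable (fun θ : ℝ => r^2 * (Real.sin θ * Real.cos θ)) volume 0 (2*Real.pi) := by
    apply Continuous.intervalIntegrable; continuity
  have i0 : IntervalIntegrable (fun θ : ℝ => c.re * c.im) volume 0 (2*Real.pi) :=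
    intervalIntegrable_const
  have i4 : IntervalIntegrable (fun θ : ℝ => (r * c.re) * Real.sin θ) volume 0 (2*Real.pi) := by
    apply Continuous.intervalIntegrable; continuity
  rw [integral_add (i1.add i2) i3, integral_add i1 i2, integral_add i0 i4,
    intervalIntegral.integral_const, intervalIntegral.integral_const_mul, intervalIntegral.integral_const_mul, intervalIntegral.integral_const_mul,
    integral_sin, integral_cos, integral_sin_mul_cos₁]
  simp [Real.sin_two_pi, Real.cos_two_pi]

lemma int_sq (c : ℂ) (r : ℝ) :
    (∫ θ in (0:ℝ)..(2*Real.pi),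
      ((c + r * Complex.exp (θ * Complex.I)).re ^ 2 + (c + r * Complex.exp (θ * Complex.I)).im ^ 2))
    = 2 * Real.pi * ((c.re ^ 2 + c.im ^ 2) + r ^ 2) := by
  simp only [circle_re, circle_im]
  have h : ∀ θ : ℝ, (c.re + r * Real.cos θ)^2 + (c.im + r * Real.sin θ)^2
      = (c.re^2 + c.im^2 + r^2 * (Real.sin θ^2 + Real.cos θ^2) - r^2)
        + (2*r*c.re) * Real.cos θ + ((2*r*c.im) * Real.sin θ + r^2) := by intro θ; ring
  simp only [h, Real.sin_sq_add_cos_sq]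
  have i1 : IntervalIntegrable (fun θ : ℝ => (c.re^2 + c.im^2 + r^2 * 1 - r^2) + (2*r*c.re) * Real.cos θ) volume 0 (2*Real.pi) := by
    apply Continuous.intervalIntegrable; continuity
  have i2 : IntervalIntegrable (fun θ : ℝ => (2*r*c.im) * Real.sin θ + r^2) volume 0 (2*Real.pi) := by
    apply Continuous.intervalIntegrable; continuity
  have i0 : IntervalIntegrable (fun θ : ℝ => (c.re^2 + c.im^2 + r^2 * 1 - r^2 : ℝ)) volume 0 (2*Real.pi) :=
    intervalIntegrable_const
  have i4 : IntervalIntegrable (fun θ : ℝ => (2*r*c.re) * Real.cos θ) volume 0 (2*Real.pi) := by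
    apply Continuous.intervalIntegrable; continuity
  have i5 : IntervalIntegrable (fun θ : ℝ => (2*r*c.im) * Real.sin θ) volume 0 (2*Real.pi) := by
    apply Continuous.intervalIntegrable; continuity
  rw [integral_add i1 i2, integral_add i0 i4, integral_add i5 intervalIntegrable_const,
    intervalIntegral.integral_const, intervalIntegral.integral_const, intervalIntegral.integral_const_mul, intervalIntegral.integral_const_mul,
    integral_sin, integral_cos]
  simp [Real.sin_two_pi, Real.cos_two_pi]
  ring


lemma q_le_sq {w : ℂ} {R : ℝ} (hw : ‖w‖ ≤ R) : w.re ^ 2 + w.im ^ 2 ≤ R ^ 2 := by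
  have h1 : w.re ^ 2 + w.im ^ 2 = ‖w‖ ^ 2 := by
    rw [Complex.sq_norm, Complex.normSq_apply]; ring
  rw [h1]
  exact pow_le_pow_left₀ (norm_nonneg w) hw 2

lemma max_principle {R₀ : ℝ} (hR₀ : 0 < R₀) {u h : ℂ → ℝ} {V : Set ℂ}
    (hV : IsOpen V) (hVb : V ⊆ ball (0:ℂ) R₀)
    (husc : UpperSemicontinuousOn u (closure V))
    (hmean : ∀ (c : ℂ) (r : ℝ), 0 < r → closedBall c r ⊆ V →
      u c ≤ (2 * Real.pi)⁻¹ * ∫ θ in (0:ℝ)..(2*Real.pi), u (c + r * Complex.exp (θ * Complex.I)))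
    (hhc : Continuous h)
    (hh0 : ∀ z ∈ closure V, 0 ≤ h z)
    (hharm : ∀ (c : ℂ) (r : ℝ),
      (∫ θ in (0:ℝ)..(2*Real.pi), h (c + r * Complex.exp (θ * Complex.I))) = 2 * Real.pi * h c)
    (hbd : ∀ z ∈ closure V \ V, u z ≤ h z) :
    ∀ z ∈ V, u z ≤ h z := by
  intro z hz
  have hclb : closure V ⊆ closedBall (0:ℂ) R₀ :=
    (closure_mono hVb).trans closure_ball_subset_closedBall
  have hcomp : IsCompact (closure V) :=
    (isCompact_closedBall (0:ℂ) R₀).of_isClosed_subset isClosed_closure hclb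
  have key : ∀ ε : ℝ, 0 < ε → u z - h z ≤ ε * R₀ ^ 2 := by
    intro ε hε
    set q : ℂ → ℝ := fun w => w.re ^ 2 + w.im ^ 2 with hq
    set f : ℂ → ℝ := fun w => u w + (ε * q w - h w) with hf
    have hqcont : Continuous q := by fun_prop
    have hfusc : UpperSemicontinuousOn f (closure V) :=
      husc.add ((((continuous_const.mul hqcont)).sub hhc).continuousOn.upperSemicontinuousOn)
    obtain ⟨c, hcK, hcmax⟩ := usc_exists_max hcomp ⟨z, subset_closure hz⟩ hfusc
    have hqR : ∀ w ∈ closure V, q w ≤ R₀ ^ 2 := fun w hw =>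
      q_le_sq (mem_closedBall_zero_iff.1 (hclb hw))
    have hfc : f c ≤ ε * R₀ ^ 2 := by
      by_cases hcV : c ∈ V
      · -- interior point: derive bound via mean value property
        obtain ⟨δ, hδ, hball⟩ := Metric.isOpen_iff.1 hV c hcV
        set r : ℝ := δ / 2 with hr
        have hrpos : 0 < r := by positivity
        have hcb : closedBall c r ⊆ V :=
          (closedBall_subset_ball (by linarith)).trans hball
        have hmean' := hmean c r hrpos hcb
        have hcirc : ∀ θ : ℝ, c + r * Complex.exp (θ * Complex.I) ∈ closure V := by
          intro θ
          apply subset_closure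
          apply hcb
          simp only [mem_closedBall, dist_eq_norm, add_sub_cancel_left]
          simp [norm_mul, Complex.norm_exp_ofReal_mul_I, Complex.norm_real,
            abs_of_pos hrpos]
        by_cases hi : IntervalIntegrable
            (fun θ : ℝ => u (c + r * Complex.exp (θ * Complex.I))) volume 0 (2*Real.pi)
        · exfalso
          have hrhs : IntervalIntegrable
              (fun θ : ℝ => f c + (h (c + r * Complex.exp (θ * Complex.I))
                - ε * q (c + r * Complex.exp (θ * Complex.I)))) volume 0 (2*Real.pi) := by
            apply Continuous.intervalIntegrable
            fun_prop
          have hmono : (∫ θ in (0:ℝ)..(2*Real.pi), u (c + r * Complex.exp (θ * Complex.I)))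
              ≤ ∫ θ in (0:ℝ)..(2*Real.pi), (f c + (h (c + r * Complex.exp (θ * Complex.I))
                - ε * q (c + r * Complex.exp (θ * Complex.I)))) := by
            apply intervalIntegral.integral_mono_on (by positivity) hi hrhs
            intro θ _
            have := hcmax _ (hcirc θ)
            simp only [hf] at this ⊢
            linarith
          have hInt : (∫ θ in (0:ℝ)..(2*Real.pi), (f c + (h (c + r * Complex.exp (θ * Complex.I))
                - ε * q (c + r * Complex.exp (θ * Complex.I)))))
              = 2 * Real.pi * (f c + h c - ε * q c - ε * r ^ 2) := by
            have ih : IntervalIntegrable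
                (fun θ : ℝ => h (c + r * Complex.exp (θ * Complex.I))) volume 0 (2*Real.pi) := by
              apply Continuous.intervalIntegrable; fun_prop
            have iq : IntervalIntegrable
                (fun θ : ℝ => ε * q (c + r * Complex.exp (θ * Complex.I))) volume 0 (2*Real.pi) := by
              apply Continuous.intervalIntegrable; fun_prop
            rw [integral_add intervalIntegrable_const (ih.sub iq),
              integral_sub ih iq, intervalIntegral.integral_const, intervalIntegral.integral_const_mul,
              hharm c r]
            simp only [hq]
            rw [int_sq c r]
            simp only [smul_eq_mul]
            ring
          rw [hInt] at hmono
          have hu : u c ≤ f c + h c - ε * q c - ε * r ^ 2 := by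
            calc u c ≤ (2 * Real.pi)⁻¹ * ∫ θ in (0:ℝ)..(2*Real.pi),
                u (c + r * Complex.exp (θ * Complex.I)) := hmean'
            _ ≤ (2 * Real.pi)⁻¹ * (2 * Real.pi * (f c + h c - ε * q c - ε * r ^ 2)) := by
                apply mul_le_mul_of_nonneg_left hmono
                positivity
            _ = f c + h c - ε * q c - ε * r ^ 2 := by
                rw [inv_mul_cancel_left₀ (by positivity : (2 * Real.pi) ≠ 0)]
          have : f c = u c + ε * q c - h c := by simp only [hf]; ring
          have hpos : 0 < ε * r ^ 2 := by positivity
          linarith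
        · -- integral undefined: u c ≤ 0
          rw [intervalIntegral.integral_undef hi, mul_zero] at hmean'
          have : f c = u c + ε * q c - h c := by simp only [hf]; ring
          have h1 := hh0 c hcK
          have h2 := hqR c hcK
          nlinarith
      · -- boundary point
        have h1 := hbd c ⟨hcK, hcV⟩
        have h2 := hqR c hcK
        simp only [hf]
        nlinarith
    have hfz := hcmax z (subset_closure hz)
    have hq0 : 0 ≤ q z := by positivity
    simp only [hf] at hfz hfc
    nlinarith
  by_contra hcon
  push_neg at hcon
  have hε : 0 < (u z - h z) / (2 * R₀ ^ 2) := by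
    have : 0 < u z - h z := by linarith
    positivity
  have := key _ hε
  have heq : (u z - h z) / (2 * R₀ ^ 2) * R₀ ^ 2 = (u z - h z) / 2 := by
    field_simp
  rw [heq] at this
  linarith


lemma quadrant_bound (R₀ C σ τ : ℝ) (hR₀ : 0 < R₀) (hC : 0 < C)
    (hσ : σ = 1 ∨ σ = -1) (hτ : τ = 1 ∨ τ = -1)
    (U : Set ℂ) (hUR : closedBall 0 R₀ ⊆ U)
    (u : ℂ → ℝ) (hsub : SubharmonicOn u U)
    (hbd : ∀ z : ℂ, ‖z‖ = R₀ → u z ≤ 2 * C * |z.re * z.im|)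
    (hx : ∀ x : ℝ, |x| < R₀ → u (x : ℂ) ≤ 0)
    (hy : ∀ y : ℝ, |y| < R₀ → u ((y : ℂ) * Complex.I) ≤ 0) :
    ∀ z : ℂ, ‖z‖ < R₀ → 0 < σ * z.re → 0 < τ * z.im →
      u z ≤ 2 * C * ((σ * z.re) * (τ * z.im)) := by
  intro z hz hzre hzim
  set V : Set ℂ := ball 0 R₀ ∩ ({w | 0 < σ * w.re} ∩ {w | 0 < τ * w.im}) with hVdef
  set h : ℂ → ℝ := fun w => 2 * C * σ * τ * (w.re * w.im) with hhdef
  have habs : ∀ w : ℂ, 0 ≤ σ * w.re → σ * w.re = |w.re| := by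
    intro w hw
    rcases hσ with h1 | h1 <;> subst h1
    · rw [one_mul] at hw ⊢; exact (_root_.abs_of_nonneg hw).symm
    · rw [neg_one_mul] at hw ⊢
      rw [_root_.abs_of_nonpos (by linarith)]
  have habs' : ∀ w : ℂ, 0 ≤ τ * w.im → τ * w.im = |w.im| := by
    intro w hw
    rcases hτ with h1 | h1 <;> subst h1
    · rw [one_mul] at hw ⊢; exact (_root_.abs_of_nonneg hw).symm
    · rw [neg_one_mul] at hw ⊢
      rw [_root_.abs_of_nonpos (by linarith)]
  have hVopen : IsOpen V :=
    (isOpen_ball).inter ((isOpen_lt continuous_const (continuous_const.mul Complex.continuous_re)).inter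
      (isOpen_lt continuous_const (continuous_const.mul Complex.continuous_im)))
  have hVb : V ⊆ ball (0:ℂ) R₀ := Set.inter_subset_left
  have hcl : closure V ⊆ closedBall (0:ℂ) R₀ ∩ ({w | 0 ≤ σ * w.re} ∩ {w | 0 ≤ τ * w.im}) := by
    apply closure_minimal
    · refine Set.inter_subset_inter ball_subset_closedBall ?_
      intro w hw
      simp only [Set.mem_inter_iff, Set.mem_setOf_eq] at hw ⊢
      exact ⟨hw.1.le, hw.2.le⟩
    · refine (isClosed_closedBall).inter (IsClosed.inter ?_ ?_)
      · exact isClosed_le continuous_const (continuous_const.mul Complex.continuous_re)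
      · exact isClosed_le continuous_const (continuous_const.mul Complex.continuous_im)
  have hsubU : closedBall (0:ℂ) R₀ ⊆ U := hUR
  have husc : UpperSemicontinuousOn u (closure V) :=
    hsub.1.mono (fun w hw => hsubU (hcl hw).1)
  have hmean : ∀ (c : ℂ) (r : ℝ), 0 < r → closedBall c r ⊆ V →
      u c ≤ (2 * Real.pi)⁻¹ * ∫ θ in (0:ℝ)..(2*Real.pi), u (c + r * Complex.exp (θ * Complex.I)) := by
    intro c r hr hball
    exact hsub.2 c r hr (hball.trans (hVb.trans (ball_subset_closedBall.trans hsubU)))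
  have hhc : Continuous h := by fun_prop
  have hh0 : ∀ w ∈ closure V, 0 ≤ h w := by
    intro w hw
    have h1 : 0 ≤ σ * w.re := (hcl hw).2.1
    have h2 : 0 ≤ τ * w.im := (hcl hw).2.2
    have key : h w = 2 * C * ((σ * w.re) * (τ * w.im)) := by simp only [hhdef]; ring
    rw [key]
    have := mul_nonneg h1 h2
    positivity
  have hharm : ∀ (c : ℂ) (r : ℝ),
      (∫ θ in (0:ℝ)..(2*Real.pi), h (c + r * Complex.exp (θ * Complex.I))) = 2 * Real.pi * h c := by
    intro c r
    simp only [hhdef]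
    rw [intervalIntegral.integral_const_mul, int_mul c r]
    ring
  have hbdV : ∀ w ∈ closure V \ V, u w ≤ h w := by
    rintro w ⟨hwcl, hwV⟩
    have h1 : 0 ≤ σ * w.re := (hcl hwcl).2.1
    have h2 : 0 ≤ τ * w.im := (hcl hwcl).2.2
    have hwle : ‖w‖ ≤ R₀ := mem_closedBall_zero_iff.1 (hcl hwcl).1
    rcases eq_or_lt_of_le hwle with heq | hlt
    · -- on the sphere
      refine (hbd w heq).trans_eq ?_
      rw [abs_mul, ← habs w h1, ← habs' w h2]
      simp only [hhdef]; ring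
    · -- strictly inside: must be on an axis
      have hnot : ¬(0 < σ * w.re ∧ 0 < τ * w.im) := by
        intro ⟨ha, hb⟩
        exact hwV ⟨mem_ball_zero_iff.2 hlt, ha, hb⟩
      have haxis : w.re = 0 ∨ w.im = 0 := by
        rcases hσ with h' | h' <;> rcases hτ with h'' | h'' <;> subst h' <;> subst h'' <;>
          rcases not_and_or.1 hnot with hh | hh <;>
          [skip; skip; skip; skip; skip; skip; skip; skip] <;>
          first
          | (left; nlinarith)
          | (right; nlinarith)
      rcases haxis with h0 | h0
      · have hw : w = (w.im : ℂ) * Complex.I := by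
          apply Complex.ext <;> simp [h0]
        have him : |w.im| < R₀ := lt_of_le_of_lt (by exact Complex.abs_im_le_norm w) hlt
        have := hy w.im him
        rw [← hw] at this
        refine this.trans ?_
        simp only [hhdef, h0]; ring_nf; rfl
      · have hw : w = (w.re : ℂ) := by
          apply Complex.ext <;> simp [h0]
        have hre : |w.re| < R₀ := lt_of_le_of_lt (by exact Complex.abs_re_le_norm w) hlt
        have := hx w.re hre
        rw [← hw] at this
        refine this.trans ?_
        simp only [hhdef, h0]; ring_nf; rfl
  have hzV : z ∈ V := ⟨mem_ball_zero_iff.2 hz, hzre, hzim⟩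
  have := max_principle hR₀ hVopen hVb husc hmean hhc hh0 hharm hbdV z hzV
  refine this.trans_eq ?_
  simp only [hhdef]; ring


end Aux

/-- If `u` is subharmonic on a neighborhood of the closed disk of radius `R₀`,
`u ≤ v₁` on the circle of radius `R₀` (where `v₁(x,y) = 2C|xy| = C r²|sin 2θ|`, `C > 0`),
and `u ≤ 0` on both coordinate axes inside the disk, then `u(x,y) ≤ C(x²+y²)`
throughout the open disk. -/
theorem subharmonic_quadratic_bound (R₀ C : ℝ) (hR₀ : 0 < R₀) (hC : 0 < C)
    (U : Set ℂ) (hU : IsOpen U) (hUR : closedBall 0 R₀ ⊆ U)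
    (u : ℂ → ℝ) (hsub : SubharmonicOn u U)
    (hbd : ∀ z : ℂ, ‖z‖ = R₀ → u z ≤ 2 * C * |z.re * z.im|)
    (hx : ∀ x : ℝ, |x| < R₀ → u (x : ℂ) ≤ 0)
    (hy : ∀ y : ℝ, |y| < R₀ → u ((y : ℂ) * Complex.I) ≤ 0) :
    ∀ z : ℂ, ‖z‖ < R₀ → u z ≤ C * (z.re ^ 2 + z.im ^ 2) := by
  intro z hz
  have hrhs : 0 ≤ C * (z.re ^ 2 + z.im ^ 2) := by positivity
  by_cases hre : z.re = 0
  · have hw : z = (z.im : ℂ) * Complex.I := by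
      apply Complex.ext <;> simp [hre]
    have him : |z.im| < R₀ :=
      lt_of_le_of_lt (by exact Complex.abs_im_le_norm z) hz
    have := hy z.im him
    rw [← hw] at this
    linarith
  · by_cases him : z.im = 0
    · have hw : z = (z.re : ℂ) := by
        apply Complex.ext <;> simp [him]
      have hre' : |z.re| < R₀ :=
        lt_of_le_of_lt (by exact Complex.abs_re_le_norm z) hz
      have := hx z.re hre'
      rw [← hw] at this
      linarith
    · set σ : ℝ := if 0 < z.re then 1 else -1 with hσdef
      set τ : ℝ := if 0 < z.im then 1 else -1 with hτdef
      have hσ : σ = 1 ∨ σ = -1 := by unfold σ; split_ifs <;> simp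
      have hτ : τ = 1 ∨ τ = -1 := by unfold τ; split_ifs <;> simp
      have hσre : σ * z.re = |z.re| := by
        unfold σ; split_ifs with h'
        · rw [one_mul, _root_.abs_of_pos h']
        · rw [neg_one_mul, _root_.abs_of_neg (lt_of_le_of_ne (not_lt.1 h') hre)]
      have hτim : τ * z.im = |z.im| := by
        unfold τ; split_ifs with h'
        · rw [one_mul, _root_.abs_of_pos h']
        · rw [neg_one_mul, _root_.abs_of_neg (lt_of_le_of_ne (not_lt.1 h') him)]
      have h1 : 0 < σ * z.re := by rw [hσre]; exact abs_pos.2 hre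
      have h2 : 0 < τ * z.im := by rw [hτim]; exact abs_pos.2 him
      have := quadrant_bound R₀ C σ τ hR₀ hC hσ hτ U hUR u hsub hbd hx hy z hz h1 h2
      rw [hσre, hτim] at this
      refine this.trans ?_
      nlinarith [mul_nonneg hC.le (sq_nonneg (|z.re| - |z.im|)), _root_.sq_abs z.re, _root_.sq_abs z.im]
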